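/- arXiv:0811.3546 — 2 statements merged into one kernel-verified Lean document; each statement's English description precedes it below -/
import Mathlib

section
/- Let k, n ≥ 1 be integers with k, n ≢ 2 (mod 4). Then ℤ[ζₖ] ⊆ ℤ[ζₙ] (as subrings of ℂ) if and only if k divides n. -/
set_option maxHeartbeats 1000000


open Complex

lemma tot_aux {n m : ℕ} (hn : 0 < n) (hnm : n ∣ m) (hm : 0 < m)
    (h : Nat.totient m = Nat.totient n) : m = n ∨ (m = 2 * n ∧ ¬ 2 ∣ n) := by
  obtain ⟨d, rfl⟩ := hnm
  have hd : 0 < d := Nat.pos_of_ne_zero (by rintro rfl; simp at hm)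
  have hφn : 0 < Nat.totient n := Nat.totient_pos.2 hn
  have key : ∀ p : ℕ, p.Prime → p ∣ d → p = 2 ∧ ¬ p ∣ n := by
    intro p hp hpd
    have h1 : Nat.totient (n * p) ∣ Nat.totient (n * d) :=
      Nat.totient_dvd_of_dvd (mul_dvd_mul_left n hpd)
    have h2 : Nat.totient n ∣ Nat.totient (n * p) :=
      Nat.totient_dvd_of_dvd ⟨p, rfl⟩
    have heq : Nat.totient (n * p) = Nat.totient n :=
      Nat.dvd_antisymm (h ▸ h1) h2
    by_cases hpn : p ∣ n
    · exfalso
      rw [mul_comm, Nat.totient_mul_of_prime_of_dvd hp hpn] at heq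
      have hp2 : 2 ≤ p := hp.two_le
      have hmul := Nat.mul_le_mul_right (Nat.totient n) hp2
      linarith
    · rw [mul_comm, Nat.totient_mul_of_prime_of_not_dvd hp hpn] at heq
      have hp2 : 2 ≤ p := hp.two_le
      have hq1 : p - 1 = 1 := by
        by_contra hq
        have h2 : 2 ≤ p - 1 := by omega
        have hmul := Nat.mul_le_mul_right (Nat.totient n) h2
        linarith
      exact ⟨by omega, hpn⟩
  rcases eq_or_ne d 1 with rfl | hd1
  · left; simp
  · obtain ⟨p, hp, hpd⟩ := Nat.exists_prime_and_dvd hd1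
    obtain ⟨hp2, hn2⟩ := key p hp hpd
    subst hp2
    obtain ⟨e, rfl⟩ := hpd
    have he : 0 < e := Nat.pos_of_ne_zero (by rintro rfl; simp at hd)
    have he1 : e = 1 := by
      by_contra he1
      obtain ⟨q, hq, hqe⟩ := Nat.exists_prime_and_dvd he1
      obtain ⟨hq2, -⟩ := key q hq (Dvd.dvd.mul_left hqe 2)
      subst hq2
      -- then 4 ∣ d, so φ(4n) ∣ φ(nd) = φ(n), but φ(4n) = 2 φ(n)
      have hcop : Nat.Coprime n 4 := by
        have : Nat.Coprime n 2 :=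
          Nat.coprime_comm.1 ((Nat.Prime.coprime_iff_not_dvd Nat.prime_two).2 hn2)
        simpa using this.pow_right 2
      have h4 : n * 4 ∣ n * (2 * e) := by
        obtain ⟨f, rfl⟩ := hqe
        exact mul_dvd_mul_left n ⟨f, by ring⟩
      have h1 : Nat.totient (n * 4) ∣ Nat.totient (n * (2 * e)) :=
        Nat.totient_dvd_of_dvd h4
      rw [h, Nat.totient_mul hcop] at h1
      have : Nat.totient 4 = 2 := by decide
      rw [this] at h1
      have := Nat.le_of_dvd hφn h1
      omega
    right
    subst he1
    exact ⟨by ring, hn2⟩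

/-- For `k, n ≥ 1` with `k, n ≢ 2 (mod 4)`, `ℤ[ζₖ] ⊆ ℤ[ζₙ]` (as subrings of `ℂ`)
iff `k ∣ n`. -/
theorem stmt_10 (k n : ℕ) (hk : 1 ≤ k) (hn : 1 ≤ n)
    (hk4 : k % 4 ≠ 2) (hn4 : n % 4 ≠ 2) :
    Algebra.adjoin ℤ ({Complex.exp (2 * Real.pi * Complex.I / k)} : Set ℂ)
        ≤ Algebra.adjoin ℤ ({Complex.exp (2 * Real.pi * Complex.I / n)} : Set ℂ)
      ↔ k ∣ n := by
  have hk0 : (k : ℕ) ≠ 0 := by omega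
  have hn0 : (n : ℕ) ≠ 0 := by omega
  have hμk := Complex.isPrimitiveRoot_exp k hk0
  have hμn := Complex.isPrimitiveRoot_exp n hn0
  constructor
  · intro h
    -- the k-th root of unity lies in the ℚ-algebra generated by the n-th one
    set L := Algebra.adjoin ℚ ({Complex.exp (2 * Real.pi * Complex.I / n)} : Set ℂ) with hL
    have hyL : Complex.exp (2 * Real.pi * Complex.I / n) ∈ L :=
      Algebra.subset_adjoin rfl
    have hxL : Complex.exp (2 * Real.pi * Complex.I / k) ∈ L := by
      have h1 : Complex.exp (2 * Real.pi * Complex.I / k) ∈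
          Algebra.adjoin ℤ ({Complex.exp (2 * Real.pi * Complex.I / n)} : Set ℂ) :=
        h (Algebra.subset_adjoin rfl)
      have h2 : Algebra.adjoin ℤ ({Complex.exp (2 * Real.pi * Complex.I / n)} : Set ℂ) ≤
          Subalgebra.restrictScalars ℤ L :=
        Algebra.adjoin_le (by simpa using hyL)
      exact h2 h1
    set x : L := ⟨_, hxL⟩ with hx'
    set y : L := ⟨_, hyL⟩ with hy'
    have hx : IsPrimitiveRoot x k := IsPrimitiveRoot.coe_submonoidClass_iff.1 hμk
    have hy : IsPrimitiveRoot y n := IsPrimitiveRoot.coe_submonoidClass_iff.1 hμn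
    haveI : NeZero n := ⟨hn0⟩
    haveI hcyc : IsCyclotomicExtension {n} ℚ L :=
      hμn.adjoin_isCyclotomicExtension ℚ (n := n)
    haveI : FiniteDimensional ℚ L :=
      IsCyclotomicExtension.finiteDimensional {n} ℚ L
    have hlcm : 0 < Nat.lcm k n := Nat.lcm_pos (by omega) (by omega)
    have key := IsPrimitiveRoot.lcm_totient_le_finrank hx hy
      (Polynomial.cyclotomic.irreducible_rat hlcm)
    rw [IsCyclotomicExtension.finrank L
      (Polynomial.cyclotomic.irreducible_rat (n := n) hn)] at key
    have hdvd : Nat.totient n ∣ Nat.totient (Nat.lcm k n) :=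
      Nat.totient_dvd_of_dvd (Nat.dvd_lcm_right k n)
    have heq : Nat.totient (Nat.lcm k n) = Nat.totient n :=
      Nat.le_antisymm key (Nat.le_of_dvd (Nat.totient_pos.2 (by omega)) hdvd)
    have hk_lcm : k ∣ Nat.lcm k n := Nat.dvd_lcm_left k n
    rcases tot_aux (by omega) (Nat.dvd_lcm_right k n) hlcm heq with h1 | ⟨h2, hodd⟩
    · rwa [h1] at hk_lcm
    · rw [h2] at hk_lcm
      by_cases h2k : 2 ∣ k
      · exfalso
        have h4k : 4 ∣ k := by omega
        have : (4 : ℕ) ∣ 2 * n := h4k.trans hk_lcm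
        omega
      · have hcop : Nat.Coprime k 2 :=
          Nat.coprime_comm.1 ((Nat.Prime.coprime_iff_not_dvd Nat.prime_two).2 h2k)
        exact hcop.dvd_of_dvd_mul_left hk_lcm
  · rintro ⟨c, rfl⟩
    have hc : c ≠ 0 := by
      rintro rfl; simp at hn
    apply Algebra.adjoin_le
    rw [Set.singleton_subset_iff]
    have hpow : (Complex.exp (2 * Real.pi * Complex.I / (k * c : ℕ))) ^ c =
        Complex.exp (2 * Real.pi * Complex.I / k) := by
      rw [← Complex.exp_nat_mul]
      congr 1
      have hk0' : (k : ℂ) ≠ 0 := Nat.cast_ne_zero.2 (by omega)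
      have hc0' : (c : ℂ) ≠ 0 := Nat.cast_ne_zero.2 hc
      push_cast
      field_simp
    rw [← hpow]
    exact Subalgebra.pow_mem _ (Algebra.subset_adjoin (Set.mem_singleton _)) c
end

section
/- Let p ≥ 5 be a Sophie Germain prime (so q = 2p+1 is prime), let n = q, and let m ≥ 8 be even. Then ℚ(ζ_{m/2} + ζ_{m/2}⁻¹) ⊆ ℚ(ζₙ + ζₙ⁻¹) if and only if m ∈ {8, 12, 2n, 4n}. -/
open Complex IntermediateField Polynomial Module

lemma pow_add_inv_pow_mem (ζ : ℂ) (hζ : ζ ≠ 0) (j : ℕ) :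
    ζ ^ j + ζ⁻¹ ^ j ∈ (ℚ⟮ζ + ζ⁻¹⟯ : IntermediateField ℚ ℂ) := by
  set L : IntermediateField ℚ ℂ := ℚ⟮ζ + ζ⁻¹⟯ with hL
  suffices h : ∀ j : ℕ, ζ ^ j + ζ⁻¹ ^ j ∈ L ∧ ζ ^ (j+1) + ζ⁻¹ ^ (j+1) ∈ L from (h j).1
  intro j
  induction j with
  | zero =>
    refine ⟨?_, ?_⟩
    · simp only [pow_zero, one_add_one_eq_two]
      exact_mod_cast _root_.natCast_mem L 2
    · simpa only [zero_add, pow_one] using mem_adjoin_simple_self ℚ (ζ + ζ⁻¹)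
  | succ j ih =>
    refine ⟨ih.2, ?_⟩
    have h1 : ζ ^ (j+2) + ζ⁻¹ ^ (j+2)
        = (ζ + ζ⁻¹) * (ζ ^ (j+1) + ζ⁻¹ ^ (j+1)) - (ζ ^ j + ζ⁻¹ ^ j) := by
      field_simp
      linear_combination (ζ⁻¹ ^ j * (ζ⁻¹ - ζ)) * mul_inv_cancel₀ hζ
    rw [h1]
    exact sub_mem (mul_mem (mem_adjoin_simple_self ℚ (ζ + ζ⁻¹)) ih.2) ih.1

lemma conj_eq_of_mem_adjoin {t x : ℂ} (ht : (starRingEnd ℂ) t = t)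
    (hx : x ∈ (ℚ⟮t⟯ : IntermediateField ℚ ℂ)) : (starRingEnd ℂ) x = x := by
  induction hx using IntermediateField.adjoin_induction with
  | mem y hy => rwa [Set.mem_singleton_iff.1 hy]
  | algebraMap y => simp [Complex.conj_ofReal]
  | add x y _ _ hx hy => rw [map_add, hx, hy]
  | inv x _ hx => rw [map_inv₀, hx]
  | mul x y _ _ hx hy => rw [map_mul, hx, hy]

lemma two_mul_finrank_real_cyclo (k : ℕ) (hk : 3 ≤ k) :
    2 * Module.finrank ℚ (ℚ⟮Complex.exp (2 * Real.pi * Complex.I / k) +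
      (Complex.exp (2 * Real.pi * Complex.I / k))⁻¹⟯ : IntermediateField ℚ ℂ) = k.totient := by
  set ζ : ℂ := Complex.exp (2 * Real.pi * Complex.I / k) with hζdef
  have hprim : IsPrimitiveRoot ζ k := Complex.isPrimitiveRoot_exp k (by omega)
  have hζ0 : ζ ≠ 0 := Complex.exp_ne_zero _
  have hint : IsIntegral ℚ ζ := (hprim.isIntegral (by omega)).tower_top
  have hζform : ζ = Complex.exp ((2 * Real.pi / k : ℝ) * Complex.I) := by
    rw [hζdef]
    push_cast
    ring_nf
  have hconjζ : (starRingEnd ℂ) ζ = ζ⁻¹ := by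
    rw [hζform, ← Complex.exp_conj, map_mul, Complex.conj_I, Complex.conj_ofReal, mul_neg,
      Complex.exp_neg]
  set t : ℂ := ζ + ζ⁻¹ with htdef
  have ht : (starRingEnd ℂ) t = t := by
    rw [htdef, map_add, hconjζ, map_inv₀, hconjζ, inv_inv, add_comm]
  set L : IntermediateField ℚ ℂ := ℚ⟮t⟯ with hLdef
  set K : IntermediateField ℚ ℂ := ℚ⟮ζ⟯ with hKdef
  have htK : t ∈ K := add_mem (mem_adjoin_simple_self ℚ ζ) (inv_mem (mem_adjoin_simple_self ℚ ζ))
  have hLK : L ≤ K := by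
    rw [hLdef]
    exact adjoin_le_iff.2 (Set.singleton_subset_iff.2 htK)
  have hKfin : Module.finrank ℚ K = k.totient := by
    rw [hKdef, IntermediateField.adjoin.finrank hint,
      ← Polynomial.cyclotomic_eq_minpoly_rat hprim (by omega), Polynomial.natDegree_cyclotomic]
  -- the relative extension
  have hE : extendScalars hLK = IntermediateField.adjoin ↥L ({ζ} : Set ℂ) := by
    apply le_antisymm
    · intro x hx
      rw [mem_extendScalars] at hx
      have hrs : (IntermediateField.adjoin ↥L ({ζ} : Set ℂ)).restrictScalars ℚ
          = IntermediateField.adjoin ℚ ({t} ∪ {ζ}) := adjoin_adjoin_left ℚ {t} {ζ}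
      have hKeq : IntermediateField.adjoin ℚ ({t} ∪ {ζ} : Set ℂ) = K := by
        apply le_antisymm
        · exact adjoin_le_iff.2 (Set.union_subset (Set.singleton_subset_iff.2 htK)
            (Set.singleton_subset_iff.2 (mem_adjoin_simple_self ℚ ζ)))
        · rw [hKdef]
          exact adjoin_le_iff.2 (Set.singleton_subset_iff.2
            (subset_adjoin ℚ _ (Set.mem_union_right _ rfl)))
      rw [← mem_restrictScalars (K := ℚ), hrs, hKeq]
      exact hx
    · exact adjoin_le_iff.2 (Set.singleton_subset_iff.2
        ((mem_extendScalars hLK).2 (mem_adjoin_simple_self ℚ ζ)))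
  have hintL : IsIntegral ↥L ζ := hint.tower_top
  have hfr2 : Module.finrank ↥L (IntermediateField.adjoin ↥L ({ζ} : Set ℂ)) = 2 := by
    have hfr : Module.finrank ↥L (IntermediateField.adjoin ↥L ({ζ} : Set ℂ))
        = (minpoly ↥L ζ).natDegree := IntermediateField.adjoin.finrank hintL
    have htL : t ∈ L := mem_adjoin_simple_self ℚ t
    set P : Polynomial ↥L := X ^ 2 - (C ⟨t, htL⟩ * X - 1) with hPdef
    have hPmonic : P.Monic := by
      apply Polynomial.monic_X_pow_sub
      apply lt_of_le_of_lt (degree_sub_le _ _)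
      rw [max_lt_iff]
      constructor
      · exact lt_of_le_of_lt (degree_C_mul_X_le _) (by exact_mod_cast one_lt_two)
      · exact lt_of_le_of_lt degree_one_le (by exact_mod_cast Nat.zero_lt_two)
    have hProot : Polynomial.aeval ζ P = 0 := by
      rw [hPdef]
      simp only [map_sub, map_add, map_mul, map_pow, map_one, Polynomial.aeval_X, Polynomial.aeval_C]
      have : (algebraMap ↥L ℂ) ⟨t, htL⟩ = t := rfl
      rw [this, htdef]
      field_simp
      ring
    have hdvd := minpoly.dvd ↥L ζ hProot
    have hle : (minpoly ↥L ζ).natDegree ≤ 2 := by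
      have := Polynomial.natDegree_le_of_dvd hdvd hPmonic.ne_zero
      have hP2 : P.natDegree = 2 := by
        rw [hPdef]
        compute_degree!
      omega
    have hne1 : (minpoly ↥L ζ).natDegree ≠ 1 := by
      intro h1
      have : Module.finrank ↥L (IntermediateField.adjoin ↥L ({ζ} : Set ℂ)) = 1 := by rw [hfr, h1]
      rw [IntermediateField.finrank_adjoin_simple_eq_one_iff] at this
      rw [IntermediateField.mem_bot] at this
      obtain ⟨x, hx⟩ := this
      have hζL : ζ ∈ L := by
        rw [← hx]
        exact x.2
      have := conj_eq_of_mem_adjoin ht hζL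
      rw [hconjζ] at this
      have hζ2 : ζ ^ 2 = 1 := by
        rw [sq]
        nth_rewrite 2 [← this]
        exact mul_inv_cancel₀ hζ0
      have hdvd2 := hprim.dvd_of_pow_eq_one 2 hζ2
      have := Nat.le_of_dvd (by norm_num) hdvd2
      omega
    have hpos : 0 < (minpoly ↥L ζ).natDegree := minpoly.natDegree_pos hintL
    rw [hfr]
    omega
  have htower := IntermediateField.finrank_bot_mul_relfinrank hLK
  rw [IntermediateField.relfinrank_eq_finrank_of_le hLK, hE, hfr2, hKfin] at htower
  rw [mul_comm] at htower
  exact htower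


lemma totient_two_mul_odd {k c : ℕ} (hc : Odd c) (h : k.totient = 2 * c) :
    (k = 4 ∧ c = 1) ∨ ∃ r, r.Prime ∧ ¬ 2 ∣ r ∧ ∃ e, 1 ≤ e ∧
      r ^ (e - 1) * (r - 1) = 2 * c ∧ (k = r ^ e ∨ k = 2 * r ^ e) := by
  have hnot4 : ¬ (4 ∣ 2 * c) := by obtain ⟨m, rfl⟩ := hc; omega
  have hk0 : k ≠ 0 := by rintro rfl; simp at h; omega
  set a := k.factorization 2 with ha
  set b := ordCompl[2] k with hb
  have hkab : 2 ^ a * b = k := Nat.ordProj_mul_ordCompl_eq_self k 2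
  have hbodd : ¬ 2 ∣ b := Nat.not_dvd_ordCompl Nat.prime_two hk0
  have hb0 : b ≠ 0 := by intro h0; rw [h0, mul_zero] at hkab; exact hk0 hkab.symm
  have hcop : Nat.Coprime (2 ^ a) b :=
    Nat.Coprime.pow_left _ (Nat.coprime_ordCompl Nat.prime_two hk0)
  have htot : (2 ^ a).totient * b.totient = 2 * c := by
    rw [← Nat.totient_mul hcop, hkab, h]
  by_cases hb1 : b = 1
  · left
    have hk2a : k = 2 ^ a := by rw [← hkab, hb1, mul_one]
    have htot2 : (2 ^ a).totient = 2 * c := by simpa [hb1] using htot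
    have ha2 : 2 ≤ a := by
      by_contra hlt
      have h1 : (2 ^ a).totient = 1 := by interval_cases a <;> decide
      omega
    have h2a : (2 ^ a).totient = 2 ^ (a - 1) := by
      rw [Nat.totient_prime_pow Nat.prime_two (by omega)]; norm_num
    rw [h2a] at htot2
    have ha3 : a < 3 := by
      by_contra hge
      apply hnot4
      have h4 : (4:ℕ) = 2 ^ 2 := by norm_num
      rw [h4, ← htot2]
      exact pow_dvd_pow 2 (by omega)
    have haa : a = 2 := by omega
    rw [haa] at htot2 hk2a
    norm_num at htot2
    exact ⟨by rw [hk2a]; norm_num, by omega⟩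
  · have hb3 : 3 ≤ b := by
      by_contra h3
      interval_cases b <;> omega
    have hbev : 2 ∣ b.totient := (Nat.totient_even (by omega)).two_dvd
    have ha1 : a ≤ 1 := by
      by_contra h2
      have h2a : 2 ∣ (2 ^ a).totient := by
        rw [Nat.totient_prime_pow Nat.prime_two (by omega)]
        exact Dvd.dvd.mul_right (dvd_pow_self 2 (by omega : a - 1 ≠ 0)) _
      obtain ⟨u, hu⟩ := h2a
      obtain ⟨v, hv⟩ := hbev
      exact hnot4 ⟨u * v, by rw [← htot, hu, hv]; ring⟩
    set r := b.minFac with hr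
    have hrp : r.Prime := Nat.minFac_prime (by omega)
    have hrdvd : r ∣ b := Nat.minFac_dvd b
    have hrodd : ¬ 2 ∣ r := by
      intro h2
      exact hbodd (((Nat.prime_dvd_prime_iff_eq Nat.prime_two hrp).mp h2) ▸ hrdvd)
    have hr3 : 3 ≤ r := by
      have := hrp.two_le
      by_contra h3
      interval_cases r <;> omega
    set e := b.factorization r with he
    have he1 : 1 ≤ e := hrp.factorization_pos_of_dvd (by omega) hrdvd
    set c' := ordCompl[r] b with hc'
    have hbrc : r ^ e * c' = b := Nat.ordProj_mul_ordCompl_eq_self b r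
    have hcop' : Nat.Coprime (r ^ e) c' :=
      Nat.Coprime.pow_left _ (Nat.coprime_ordCompl hrp (by omega))
    have hphibdvd : b.totient ∣ 2 * c := ⟨(2 ^ a).totient, by rw [← htot, mul_comm]⟩
    have hc'1 : c' = 1 := by
      by_contra hc1
      have hc'0 : c' ≠ 0 := by intro h0; rw [h0, mul_zero] at hbrc; omega
      have hc'dvd : c' ∣ b := ⟨r ^ e, by rw [← hbrc, mul_comm]⟩
      have hc'odd : ¬ 2 ∣ c' := fun hd => hbodd (hd.trans hc'dvd)
      have hc'3 : 3 ≤ c' := by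
        by_contra h3
        interval_cases c' <;> omega
      have hre3 : 2 < r ^ e := lt_of_lt_of_le (by omega) (Nat.le_self_pow (by omega) r)
      obtain ⟨u, hu⟩ := (Nat.totient_even hre3).two_dvd
      obtain ⟨v, hv⟩ := (Nat.totient_even (by omega : 2 < c')).two_dvd
      have h4b : (4:ℕ) ∣ b.totient := by
        rw [← hbrc, Nat.totient_mul hcop', hu, hv]
        exact ⟨u * v, by ring⟩
      exact hnot4 (h4b.trans hphibdvd)
    have hbre : b = r ^ e := by rw [← hbrc, hc'1, mul_one]
    have h2a1 : (2 ^ a).totient = 1 := by interval_cases a <;> decide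
    have hphib : b.totient = 2 * c := by rw [← htot, h2a1, one_mul]
    have hform : r ^ (e - 1) * (r - 1) = 2 * c := by
      rw [← hphib, hbre, Nat.totient_prime_pow hrp (by omega)]
    refine Or.inr ⟨r, hrp, hrodd, e, he1, hform, ?_⟩
    interval_cases a
    · left; rw [← hkab, hbre, pow_zero, one_mul]
    · right; rw [← hkab, hbre, pow_one]

lemma totient_eq_two' {k : ℕ} (hk4 : 4 ≤ k) (h : k.totient = 2) : k = 4 ∨ k = 6 := by
  rcases totient_two_mul_odd (k := k) (c := 1) ⟨0, rfl⟩ (by omega) with ⟨h4, _⟩ | ⟨r, hrp, hrodd, e, he1, hform, hk⟩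
  · exact Or.inl h4
  · have hr3 : 3 ≤ r := by have := hrp.two_le; omega
    have he : e = 1 := by
      by_contra hne
      have h1 : r ≤ r ^ (e - 1) := Nat.le_self_pow (by omega) r
      have h2 : 3 * 2 ≤ r ^ (e - 1) * (r - 1) := Nat.mul_le_mul (by omega) (by omega)
      omega
    rw [he] at hform hk
    simp only [Nat.sub_self, pow_zero, one_mul, pow_one] at hform hk
    omega

lemma totient_eq_two_mul_prime {k p : ℕ} (hp : p.Prime) (hp5 : 5 ≤ p)
    (h : k.totient = 2 * p) : k = 2 * p + 1 ∨ k = 2 * (2 * p + 1) := by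
  have hodd : Odd p := hp.odd_of_ne_two (by omega)
  rcases totient_two_mul_odd hodd h with ⟨_, hc⟩ | ⟨r, hrp, hrodd, e, he1, hform, hk⟩
  · omega
  · have hr3 : 3 ≤ r := by have := hrp.two_le; omega
    have he : e = 1 := by
      by_contra hne
      have hrdvd : r ∣ 2 * p := by
        rw [← hform]
        exact Dvd.dvd.mul_right (dvd_pow_self r (by omega : e - 1 ≠ 0)) _
      have hrp' : r = p := by
        rcases (Nat.Prime.dvd_mul hrp).1 hrdvd with h2 | hpp
        · have := Nat.le_of_dvd (by norm_num) h2; omega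
        · exact (Nat.prime_dvd_prime_iff_eq hrp hp).1 hpp
      subst hrp'
      have h1 : r ≤ r ^ (e - 1) := Nat.le_self_pow (by omega) r
      have h2 : r * 4 ≤ r ^ (e - 1) * (r - 1) := Nat.mul_le_mul h1 (by omega)
      omega
    rw [he] at hform hk
    simp only [Nat.sub_self, pow_zero, one_mul, pow_one] at hform hk
    omega

lemma zeta_add_inv_eq_two_cos (k : ℕ) :
    Complex.exp (2 * Real.pi * Complex.I / k) + (Complex.exp (2 * Real.pi * Complex.I / k))⁻¹
      = ((2 * Real.cos (2 * Real.pi / k) : ℝ) : ℂ) := by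
  have hform : (2 * (Real.pi:ℂ) * Complex.I / (k:ℂ)) = ((2 * Real.pi / k : ℝ) : ℂ) * Complex.I := by
    push_cast
    ring
  rw [hform, ← Complex.exp_neg, ← neg_mul, ← Complex.two_cos]
  push_cast
  ring

/-- For a Sophie Germain prime `p ≥ 5` (so `q = 2p+1` is prime), `n = 2p+1`, and even `m ≥ 8`:
`ℚ(ζ_{m/2} + ζ_{m/2}⁻¹) ⊆ ℚ(ζₙ + ζₙ⁻¹)` iff `m ∈ {8, 12, 2n, 4n}`. -/
theorem stmt_15 (p : ℕ) (hp : p.Prime) (hp5 : 5 ≤ p) (hSG : Nat.Prime (2 * p + 1))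
    (n : ℕ) (hn : n = 2 * p + 1) (m : ℕ) (hm : 8 ≤ m) (hmeven : Even m) :
    let ζm : ℂ := Complex.exp (2 * Real.pi * Complex.I / (m / 2 : ℕ))
    let ζn : ℂ := Complex.exp (2 * Real.pi * Complex.I / n)
    (ℚ⟮ζm + ζm⁻¹⟯ : IntermediateField ℚ ℂ) ≤ ℚ⟮ζn + ζn⁻¹⟯ ↔
      m = 8 ∨ m = 12 ∨ m = 2 * n ∨ m = 4 * n := by
  intro ζm ζn
  obtain ⟨w, hw⟩ := hmeven
  have hn0 : n ≠ 0 := by omega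
  have hnp : n.Prime := hn ▸ hSG
  have hζm : ζm = Complex.exp (2 * Real.pi * Complex.I / (m / 2 : ℕ)) := rfl
  have hζn : ζn = Complex.exp (2 * Real.pi * Complex.I / n) := rfl
  set k := m / 2 with hkdef
  have hmk : m = 2 * k := by omega
  have hk4 : 4 ≤ k := by omega
  have hdn := two_mul_finrank_real_cyclo n (by omega)
  have hdk := two_mul_finrank_real_cyclo k (by omega)
  rw [← hζn] at hdn
  rw [← hζm] at hdk
  have hntot : n.totient = 2 * p := by rw [Nat.totient_prime hnp]; omega
  have hfrn : Module.finrank ℚ (ℚ⟮ζn + ζn⁻¹⟯ : IntermediateField ℚ ℂ) = p := by omega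
  constructor
  · intro hle
    have hdvd : Module.finrank ℚ (ℚ⟮ζm + ζm⁻¹⟯ : IntermediateField ℚ ℂ) ∣ p := by
      rw [← hfrn]
      exact ⟨_, (IntermediateField.finrank_bot_mul_relfinrank hle).symm⟩
    rcases Nat.Prime.eq_one_or_self_of_dvd hp _ hdvd with h1 | hps
    · have hk2 : k.totient = 2 := by omega
      rcases totient_eq_two' hk4 hk2 with h4 | h6
      · left; omega
      · right; left; omega
    · have hk2p : k.totient = 2 * p := by omega
      rcases totient_eq_two_mul_prime hp hp5 hk2p with h | h
      · right; right; left; omega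
      · right; right; right; omega
  · intro hcase
    have hzv := zeta_add_inv_eq_two_cos k
    rw [← hζm] at hzv
    rcases hcase with h8 | h12 | h2n | h4n
    · have hk : k = 4 := by omega
      have hval : ζm + ζm⁻¹ = 0 := by
        rw [hzv, hk]
        have h4 : ((4:ℕ):ℝ) = 4 := by norm_num
        rw [h4, show (2:ℝ) * Real.pi / 4 = Real.pi / 2 by ring, Real.cos_pi_div_two]
        norm_num
      rw [hval]
      exact adjoin_simple_le_iff.2 (zero_mem _)
    · have hk : k = 6 := by omega
      have hval : ζm + ζm⁻¹ = 1 := by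
        rw [hzv, hk]
        have h6 : ((6:ℕ):ℝ) = 6 := by norm_num
        rw [h6, show (2:ℝ) * Real.pi / 6 = Real.pi / 3 by ring, Real.cos_pi_div_three]
        norm_num
      rw [hval]
      exact adjoin_simple_le_iff.2 (one_mem _)
    · have hk : k = n := by omega
      rw [show ζm = ζn by rw [hζm, hζn, hk]]
    · have hk : k = 2 * n := by omega
      have hζ0 : ζn ≠ 0 := Complex.exp_ne_zero _
      set j := (n + 1) / 2 with hj
      have hj2 : 2 * j = n + 1 := by omega
      have hjc : (j:ℂ) = ((n:ℂ) + 1) / 2 := by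
        have h2 : ((2 * j : ℕ) : ℂ) = ((n + 1 : ℕ) : ℂ) := by rw [hj2]
        push_cast at h2
        linear_combination h2 / 2
      have hn0' : (n:ℂ) ≠ 0 := Nat.cast_ne_zero.2 hn0
      have hzm : ζm = -(ζn ^ j) := by
        rw [hζm, hζn, hk]
        have h1 : ((2 * n : ℕ):ℂ) = 2 * (n:ℂ) := by push_cast; ring
        rw [h1, ← Complex.exp_nat_mul]
        rw [show -(Complex.exp ((j:ℂ) * (2 * Real.pi * Complex.I / n)))
            = Complex.exp (Real.pi * Complex.I)
              * Complex.exp ((j:ℂ) * (2 * Real.pi * Complex.I / n)) by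
          rw [Complex.exp_pi_mul_I]; ring]
        rw [← Complex.exp_add]
        have hexp : (Real.pi:ℂ) * Complex.I + (j:ℂ) * (2 * Real.pi * Complex.I / n)
            = 2 * Real.pi * Complex.I / (2 * (n:ℂ)) + 2 * Real.pi * Complex.I := by
          rw [hjc]
          field_simp
          ring
        rw [hexp, Complex.exp_add, Complex.exp_two_pi_mul_I, mul_one]
      have hform2 : ζm + ζm⁻¹ = -(ζn ^ j + (ζn⁻¹) ^ j) := by
        rw [hzm, inv_neg, ← inv_pow]
        ring
      rw [hform2]
      exact adjoin_simple_le_iff.2 (neg_mem (pow_add_inv_pow_mem ζn hζ0 j))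
end
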